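/- arXiv:2603.24127 — 2 statements merged into one kernel-verified Lean document; each statement's English description precedes it below -/
import Mathlib

section
/- Let X_1, X_2, …, Z be random variables taking values in Δ^∞. Then X_n converges in distribution to Z if and only if for every r ∈ ℕ* and all integers t_1, …, t_r ≥ 2, E(m_{t_1}(X_n) ⋯ m_{t_r}(X_n)) → E(m_{t_1}(Z) ⋯ m_{t_r}(Z)) as n → ∞. -/
open Filter Topology MeasureTheory
open scoped BoundedContinuousFunction

/-- The infinite-dimensional simplex `Δ^∞` of nonincreasing sequences in `[0,1]` whose sum is
at most `1` (expressed through partial sums), endowed with the topology of pointwise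
convergence (the subspace topology of the product topology). -/
abbrev DeltaInf : Type :=
  {x : ℕ → ℝ // (∀ j, x j ∈ Set.Icc (0 : ℝ) 1) ∧ (∀ j, x (j + 1) ≤ x j) ∧
    ∀ m : ℕ, ∑ j ∈ Finset.range m, x j ≤ 1}

/-- For `t ≥ 2`, the function `m_t : Δ^∞ → ℝ`, `m_t(x) = Σ_j x_j^t`. -/
noncomputable def mpow (t : ℕ) (x : DeltaInf) : ℝ := ∑' j : ℕ, (x.1 j) ^ t

namespace Stmt18

lemma nonneg (x : DeltaInf) (j : ℕ) : 0 ≤ x.1 j := (x.2.1 j).1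
lemma le_one (x : DeltaInf) (j : ℕ) : x.1 j ≤ 1 := (x.2.1 j).2
lemma anti (x : DeltaInf) : Antitone x.1 := antitone_nat_of_succ_le x.2.2.1

lemma coord_le (x : DeltaInf) (j : ℕ) : x.1 j ≤ 1 / (j + 1) := by
  have h1 : ((j : ℝ) + 1) * x.1 j ≤ ∑ i ∈ Finset.range (j + 1), x.1 i := by
    have : ∑ i ∈ Finset.range (j + 1), x.1 j ≤ ∑ i ∈ Finset.range (j + 1), x.1 i :=
      Finset.sum_le_sum fun i hi => anti x (Nat.le_of_lt_succ (Finset.mem_range.mp hi))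
    simpa [Finset.sum_const, mul_comm, Nat.cast_add] using this
  have h2 := x.2.2.2 (j + 1)
  have hj : (0 : ℝ) < (j : ℝ) + 1 := by positivity
  rw [le_div_iff₀ hj]
  nlinarith [h1.trans h2]

lemma summable_coord (x : DeltaInf) : Summable x.1 :=
  summable_of_sum_range_le (nonneg x) x.2.2.2

lemma pow_le_coord (x : DeltaInf) {t : ℕ} (ht : 1 ≤ t) (j : ℕ) : x.1 j ^ t ≤ x.1 j := by
  simpa using pow_le_pow_of_le_one (nonneg x j) (le_one x j) ht

lemma summable_pow (x : DeltaInf) {t : ℕ} (ht : 1 ≤ t) : Summable (fun j => x.1 j ^ t) :=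
  Summable.of_nonneg_of_le (fun j => pow_nonneg (nonneg x j) t) (pow_le_coord x ht)
    (summable_coord x)

lemma mpow_nonneg {t : ℕ} (x : DeltaInf) : 0 ≤ mpow t x :=
  tsum_nonneg fun j => pow_nonneg (nonneg x j) t

lemma mpow_le_one {t : ℕ} (ht : 1 ≤ t) (x : DeltaInf) : mpow t x ≤ 1 := by
  have h1 : mpow t x ≤ ∑' j, x.1 j :=
    Summable.tsum_le_tsum (pow_le_coord x ht) (summable_pow x ht) (summable_coord x)
  exact h1.trans (Summable.tsum_le_of_sum_range_le (summable_coord x) x.2.2.2)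

lemma continuous_mpow {t : ℕ} (ht : 2 ≤ t) : Continuous (mpow t) := by
  apply continuous_tsum (u := fun j : ℕ => (1 / ((j : ℝ) + 1)) ^ 2)
  · exact fun j => (((continuous_apply j).comp continuous_subtype_val).pow t)
  · have h := Real.summable_one_div_nat_pow.mpr (by norm_num : 1 < 2)
    have h2 := (summable_nat_add_iff 1).mpr h
    exact h2.congr fun j => by push_cast; rw [div_pow]; norm_num
  · intro j x
    have h0 := nonneg x j
    have h1 := le_one x j
    have h2 : x.1 j ^ t ≤ x.1 j ^ 2 := pow_le_pow_of_le_one h0 h1 ht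
    have h3 : x.1 j ^ 2 ≤ (1 / ((j:ℝ) + 1)) ^ 2 := by
      apply pow_le_pow_left₀ h0 (coord_le x j)
    rw [Real.norm_eq_abs, abs_of_nonneg (pow_nonneg h0 t)]
    exact h2.trans h3

instance : CompactSpace DeltaInf := by
  have hsub : {x : ℕ → ℝ | (∀ j, x j ∈ Set.Icc (0 : ℝ) 1) ∧ (∀ j, x (j + 1) ≤ x j) ∧
      ∀ m : ℕ, ∑ j ∈ Finset.range m, x j ≤ 1} ⊆ Set.univ.pi fun _ : ℕ => Set.Icc (0:ℝ) 1 :=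
    fun x hx i _ => hx.1 i
  suffices hK : IsCompact {x : ℕ → ℝ | (∀ j, x j ∈ Set.Icc (0 : ℝ) 1) ∧ (∀ j, x (j + 1) ≤ x j) ∧
      ∀ m : ℕ, ∑ j ∈ Finset.range m, x j ≤ 1} from isCompact_iff_compactSpace.mp hK
  refine IsCompact.of_isClosed_subset (isCompact_univ_pi fun _ => isCompact_Icc) ?_ hsub
  have : {x : ℕ → ℝ | (∀ j, x j ∈ Set.Icc (0 : ℝ) 1) ∧ (∀ j, x (j + 1) ≤ x j) ∧
      ∀ m : ℕ, ∑ j ∈ Finset.range m, x j ≤ 1} =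
      (⋂ j : ℕ, {x : ℕ → ℝ | x j ∈ Set.Icc (0:ℝ) 1}) ∩
      ((⋂ j : ℕ, {x : ℕ → ℝ | x (j+1) ≤ x j}) ∩
       (⋂ m : ℕ, {x : ℕ → ℝ | ∑ j ∈ Finset.range m, x j ≤ 1})) := by
    ext x; simp [Set.mem_iInter, and_assoc]
  rw [this]
  refine ((isClosed_iInter fun j => isClosed_Icc.preimage (continuous_apply j)).inter
    ((isClosed_iInter fun j => isClosed_le (continuous_apply (j+1)) (continuous_apply j)).inter
     (isClosed_iInter fun m => isClosed_le (by
        exact continuous_finset_sum _ fun j _ => continuous_apply j) continuous_const)))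

def shift (x : DeltaInf) (k : ℕ) : DeltaInf :=
  ⟨fun i => x.1 (i + k), fun j => x.2.1 _, fun j => by simpa [Nat.succ_add] using x.2.2.1 (j + k),
    fun m => by
      have h1 : ∑ j ∈ Finset.range m, x.1 (j + k) = ∑ j ∈ Finset.Ico k (m + k), x.1 j := by
        rw [Finset.sum_Ico_eq_sum_range]
        simp [add_comm k, Nat.add_sub_cancel]
      have h2 : ∑ j ∈ Finset.Ico k (m + k), x.1 j ≤ ∑ j ∈ Finset.range (m + k), x.1 j := by
        apply Finset.sum_le_sum_of_subset_of_nonneg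
        · intro i hi; simp only [Finset.mem_Ico] at hi; exact Finset.mem_range.mpr hi.2
        · intro i _ _; exact nonneg x i
      exact (h1 ▸ h2).trans (x.2.2.2 (m + k))⟩

lemma mpow_shift (x : DeltaInf) (k t : ℕ) (ht : 1 ≤ t) :
    mpow t (shift x k) = mpow t x - ∑ j ∈ Finset.range k, x.1 j ^ t := by
  have h := Summable.sum_add_tsum_nat_add k (summable_pow x ht)
  simp only [mpow, shift]
  linarith [h]

lemma head_le (x y : DeltaInf) (h : ∀ t, 2 ≤ t → mpow t x = mpow t y) : x.1 0 ≤ y.1 0 := by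
  by_contra hlt
  push_neg at hlt
  set a := x.1 0 with ha
  set b := y.1 0 with hb
  have hb0 : 0 ≤ b := nonneg y 0
  have hby : ∀ j, y.1 j ≤ b := fun j => anti y (Nat.zero_le j)
  have key : ∀ t, 2 ≤ t → a ^ t ≤ b ^ (t - 2) := by
    intro t ht
    have h1 : a ^ t ≤ mpow t x := by
      refine Summable.le_tsum (summable_pow x (by omega)) 0 fun i _ => pow_nonneg (nonneg x i) t
    have h2 : mpow t y ≤ b ^ (t-2) * mpow 2 y := by
      rw [mpow, mpow, ← tsum_mul_left]
      refine Summable.tsum_le_tsum (fun j => ?_) (summable_pow y (by omega))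
        (Summable.mul_left _ (summable_pow y one_le_two))
      have : y.1 j ^ t = y.1 j ^ (t - 2) * y.1 j ^ 2 := by
        rw [← pow_add]; congr 1; omega
      rw [this]
      exact mul_le_mul_of_nonneg_right (pow_le_pow_left₀ (nonneg y j) (hby j) _)
        (pow_nonneg (nonneg y j) 2)
    have h3 : b ^ (t-2) * mpow 2 y ≤ b ^ (t-2) * 1 :=
      mul_le_mul_of_nonneg_left (mpow_le_one one_le_two y) (pow_nonneg hb0 _)
    calc a ^ t ≤ mpow t x := h1
      _ = mpow t y := h t ht
      _ ≤ b ^ (t-2) := by linarith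
  rcases eq_or_lt_of_le hb0 with hb0' | hb0'
  · have h3 := key 3 (by norm_num)
    have : b ^ (3 - 2) = 0 := by rw [← hb0']; norm_num
    rw [this] at h3
    rw [← hb0'] at hlt
    nlinarith [pow_pos hlt 3]
  · -- b > 0, a > b : choose t with (a/b)^t > 1/b^2
    have hab : 1 < a / b := (one_lt_div hb0').mpr hlt
    have htend := tendsto_pow_atTop_atTop_of_one_lt hab
    obtain ⟨N, hN⟩ := (htend.eventually_ge_atTop (1 / b ^ 2 + 1)).exists_forall_of_atTop
    set t := max N 2 with htd
    have ht2 : 2 ≤ t := le_max_right _ _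
    have hNt := hN t (le_max_left _ _)
    have hkey := key t ht2
    have hbpos : (0:ℝ) < b ^ 2 := by positivity
    have h4 : a ^ t = b ^ t * (a/b) ^ t := by
      rw [div_pow, mul_comm, div_mul_cancel₀ _ (by positivity : (b:ℝ) ^ t ≠ 0)]
    have h5 : b ^ t * (a/b)^t > b ^ t * (1 / b^2) := by
      have hbt : (0:ℝ) < b ^ t := by positivity
      apply mul_lt_mul_of_pos_left _ hbt
      linarith
    have h6 : b ^ t * (1 / b ^ 2) = b ^ (t - 2) := by
      rw [mul_one_div]
      rw [eq_comm, eq_div_iff (ne_of_gt hbpos), ← pow_add]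
      congr 1; omega
    nlinarith [h4, h5, h6, hkey]

lemma eq_of_mpow {x y : DeltaInf} (h : ∀ t, 2 ≤ t → mpow t x = mpow t y) : x = y := by
  refine Subtype.ext (funext fun j => ?_)
  induction j using Nat.strong_induction_on with
  | _ j ih =>
    have hshift : ∀ t, 2 ≤ t → mpow t (shift x j) = mpow t (shift y j) := by
      intro t ht
      rw [mpow_shift x j t (by omega), mpow_shift y j t (by omega), h t ht]
      congr 1
      exact Finset.sum_congr rfl fun i hi => by rw [ih i (Finset.mem_range.mp hi)]
    have h1 := head_le (shift x j) (shift y j) hshift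
    have h2 := head_le (shift y j) (shift x j) (fun t ht => (hshift t ht).symm)
    exact le_antisymm (by simpa [shift] using h1) (by simpa [shift] using h2)

noncomputable def Mt {t : ℕ} (ht : 2 ≤ t) : C(DeltaInf, ℝ) := ⟨mpow t, continuous_mpow ht⟩

def Sgen : Set C(DeltaInf, ℝ) := {g | ∃ t : ℕ, ∃ ht : 2 ≤ t, g = Mt ht}

noncomputable def A : Subalgebra ℝ C(DeltaInf, ℝ) := Algebra.adjoin ℝ Sgen

lemma A_sep : A.SeparatesPoints := by
  intro x y hxy
  by_contra hc
  push_neg at hc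
  apply hxy
  apply eq_of_mpow (x := x) (y := y)
  intro t ht
  have hmem : (Mt ht : C(DeltaInf, ℝ)) ∈ (A : Set C(DeltaInf, ℝ)) :=
    Algebra.subset_adjoin ⟨t, ht, rfl⟩
  exact hc _ ⟨Mt ht, hmem, rfl⟩

instance : BorelSpace DeltaInf := Subtype.borelSpace _

lemma integ (g : C(DeltaInf, ℝ)) {Ω : Type*} [MeasurableSpace Ω] (μ : Measure Ω)
    [IsFiniteMeasure μ] (T : Ω → DeltaInf) (hT : Measurable T) :
    Integrable (fun ω => g (T ω)) μ := by
  have hm : Measurable fun ω => g (T ω) := g.continuous.measurable.comp hT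
  have hb : ∀ ω, ‖g (T ω)‖ ≤ ‖BoundedContinuousFunction.mkOfCompact g‖ := fun ω => by
    simpa using BoundedContinuousFunction.norm_coe_le_norm
      (BoundedContinuousFunction.mkOfCompact g) (T ω)
  exact ⟨hm.aestronglyMeasurable, HasFiniteIntegral.of_bounded (μ := μ) (ae_of_all _ hb)⟩

lemma dist_int {Ω : Type*} [MeasurableSpace Ω] (μ : Measure Ω) [IsProbabilityMeasure μ]
    (T : Ω → DeltaInf) (hT : Measurable T) (g h : C(DeltaInf, ℝ)) :
    dist (∫ ω, g (T ω) ∂μ) (∫ ω, h (T ω) ∂μ) ≤ ‖g - h‖ := by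
  rw [dist_eq_norm, ← integral_sub (integ g μ T hT) (integ h μ T hT)]
  have hb : ∀ ω, ‖g (T ω) - h (T ω)‖ ≤ ‖g - h‖ := fun ω => by
    have := ContinuousMap.norm_coe_le_norm (g - h) (T ω)
    simpa using this
  have := norm_integral_le_of_norm_le_const (μ := μ) (C := ‖g - h‖) (ae_of_all _ hb)
  simpa using this

end Stmt18

open Stmt18

/-- for `Δ^∞`-valued random variables `X_n` and `Z`, convergence in
distribution of `X_n` to `Z` (tested against all bounded continuous functions on `Δ^∞`) is
equivalent to the convergence `E(m_{t_1}(X_n) ⋯ m_{t_r}(X_n)) → E(m_{t_1}(Z) ⋯ m_{t_r}(Z))`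
for all `r ≥ 1` and all `t_1, …, t_r ≥ 2`. -/
theorem stmt18 {Ω Ω' : Type*} [MeasurableSpace Ω] [MeasurableSpace Ω']
    (ℙ : Measure Ω) (ℙ' : Measure Ω') [IsProbabilityMeasure ℙ] [IsProbabilityMeasure ℙ']
    (X : ℕ → Ω → DeltaInf) (Z : Ω' → DeltaInf)
    (hX : ∀ n, Measurable (X n)) (hZ : Measurable Z) :
    (∀ f : DeltaInf →ᵇ ℝ,
        Tendsto (fun n => ∫ ω, f (X n ω) ∂ℙ) atTop (𝓝 (∫ ω, f (Z ω) ∂ℙ'))) ↔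
      (∀ (r : ℕ), 1 ≤ r → ∀ (t : Fin r → ℕ), (∀ s, 2 ≤ t s) →
        Tendsto (fun n => ∫ ω, ∏ s, mpow (t s) (X n ω) ∂ℙ) atTop
          (𝓝 (∫ ω, ∏ s, mpow (t s) (Z ω) ∂ℙ'))) := by
  constructor
  · intro H r _ t ht
    let F : DeltaInf →ᵇ ℝ := BoundedContinuousFunction.mkOfCompact
      ⟨fun x => ∏ s, mpow (t s) x, continuous_finset_prod _ fun s _ => continuous_mpow (ht s)⟩
    simpa [F] using H F
  · intro H f
    have Hall : ∀ (r : ℕ) (t : Fin r → ℕ), (∀ s, 2 ≤ t s) →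
        Tendsto (fun n => ∫ ω, ∏ s, mpow (t s) (X n ω) ∂ℙ) atTop
          (𝓝 (∫ ω, ∏ s, mpow (t s) (Z ω) ∂ℙ')) := by
      intro r t ht
      rcases Nat.eq_zero_or_pos r with rfl | hr
      · simp only [Finset.univ_eq_empty, Finset.prod_empty, integral_const, measure_univ,
          ENNReal.toReal_one, probReal_univ, smul_eq_mul, one_mul]
        exact tendsto_const_nhds
      · exact H r hr t ht
    have HA : ∀ g ∈ A, Tendsto (fun n => ∫ ω, g (X n ω) ∂ℙ) atTop
        (𝓝 (∫ ω, g (Z ω) ∂ℙ')) := by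
      intro g hg
      rw [A] at hg
      have hg' : g ∈ Submodule.span ℝ ((Submonoid.closure Sgen : Submonoid _) : Set _) := by
        rw [← Algebra.adjoin_eq_span]
        exact hg
      clear hg
      induction hg' using Submodule.span_induction with
      | mem g hgm =>
        have hQ : ∃ (r : ℕ) (t : Fin r → ℕ), (∀ s, 2 ≤ t s) ∧ ∀ x, g x = ∏ s, mpow (t s) x := by
          induction hgm using Submonoid.closure_induction with
          | mem g hgS =>
            obtain ⟨t, ht, rfl⟩ := hgS
            exact ⟨1, fun _ => t, fun _ => ht, fun x => by simp [Mt]⟩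
          | one => exact ⟨0, Fin.elim0, fun s => s.elim0, fun x => by simp⟩
          | mul g h _ _ ihg ihh =>
            obtain ⟨r1, t1, ht1, he1⟩ := ihg
            obtain ⟨r2, t2, ht2, he2⟩ := ihh
            refine ⟨r1 + r2, Fin.append t1 t2, ?_, fun x => ?_⟩
            · intro s
              refine Fin.addCases (fun i => ?_) (fun i => ?_) s
              · rw [Fin.append_left]; exact ht1 i
              · rw [Fin.append_right]; exact ht2 i
            · rw [ContinuousMap.mul_apply, he1, he2, Fin.prod_univ_add]
              simp [Fin.append_left, Fin.append_right]
        obtain ⟨r, t, ht, he⟩ := hQ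
        have h1 : (fun n => ∫ ω, g (X n ω) ∂ℙ) =
            fun n => ∫ ω, ∏ s, mpow (t s) (X n ω) ∂ℙ := by
          funext n; exact integral_congr_ae (ae_of_all _ fun ω => he _)
        have h2 : (∫ ω, g (Z ω) ∂ℙ') = ∫ ω, ∏ s, mpow (t s) (Z ω) ∂ℙ' :=
          integral_congr_ae (ae_of_all _ fun ω => he _)
        rw [h1, h2]
        exact Hall r t ht
      | zero => simpa using tendsto_const_nhds
      | add g h _ _ Hg Hh =>
        have h1 : (fun n => ∫ ω, (g + h) (X n ω) ∂ℙ) =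
            fun n => (∫ ω, g (X n ω) ∂ℙ) + ∫ ω, h (X n ω) ∂ℙ := by
          funext n
          simp only [ContinuousMap.add_apply]
          exact integral_add (integ g ℙ (X n) (hX n)) (integ h ℙ (X n) (hX n))
        have h2 : (∫ ω, (g + h) (Z ω) ∂ℙ') =
            (∫ ω, g (Z ω) ∂ℙ') + ∫ ω, h (Z ω) ∂ℙ' := by
          simp only [ContinuousMap.add_apply]
          exact integral_add (integ g ℙ' Z hZ) (integ h ℙ' Z hZ)
        rw [h1, h2]
        exact Hg.add Hh
      | smul c g _ Hg =>
        have h1 : (fun n => ∫ ω, (c • g) (X n ω) ∂ℙ) =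
            fun n => c * ∫ ω, g (X n ω) ∂ℙ := by
          funext n
          simp only [ContinuousMap.smul_apply, smul_eq_mul]
          exact integral_const_mul c _
        have h2 : (∫ ω, (c • g) (Z ω) ∂ℙ') = c * ∫ ω, g (Z ω) ∂ℙ' := by
          simp only [ContinuousMap.smul_apply, smul_eq_mul]
          exact integral_const_mul c _
        rw [h1, h2]
        exact Hg.const_mul c
    rw [Metric.tendsto_atTop]
    intro ε hε
    obtain ⟨g, hg⟩ := ContinuousMap.exists_mem_subalgebra_near_continuousMap_of_separatesPoints
      A A_sep f.toContinuousMap (ε / 4) (by linarith)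
    obtain ⟨N, hN⟩ := Metric.tendsto_atTop.mp (HA g g.2) (ε / 4) (by linarith)
    refine ⟨N, fun n hn => ?_⟩
    have d1 : dist (∫ ω, f (X n ω) ∂ℙ) (∫ ω, (g : C(DeltaInf, ℝ)) (X n ω) ∂ℙ) ≤ ε / 4 := by
      have := dist_int ℙ (X n) (hX n) f.toContinuousMap g
      have hle : ‖f.toContinuousMap - (g : C(DeltaInf, ℝ))‖ ≤ ε / 4 := by
        rw [← norm_neg]; simpa [neg_sub] using hg.le
      exact this.trans hle
    have d3 : dist (∫ ω, (g : C(DeltaInf, ℝ)) (Z ω) ∂ℙ') (∫ ω, f (Z ω) ∂ℙ') ≤ ε / 4 := by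
      have := dist_int ℙ' Z hZ g f.toContinuousMap
      exact this.trans hg.le
    have d2 := hN n hn
    calc dist (∫ ω, f (X n ω) ∂ℙ) (∫ ω, f (Z ω) ∂ℙ')
        ≤ dist (∫ ω, f (X n ω) ∂ℙ) (∫ ω, (g : C(DeltaInf, ℝ)) (X n ω) ∂ℙ) +
          dist (∫ ω, (g : C(DeltaInf, ℝ)) (X n ω) ∂ℙ) (∫ ω, (g : C(DeltaInf, ℝ)) (Z ω) ∂ℙ') +
          dist (∫ ω, (g : C(DeltaInf, ℝ)) (Z ω) ∂ℙ') (∫ ω, f (Z ω) ∂ℙ') := dist_triangle4 _ _ _ _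
      _ < ε / 4 + ε / 4 + ε / 4 := by
          apply add_lt_add_of_lt_of_le (add_lt_add_of_le_of_lt d1 d2) d3 |>.trans_le le_rfl
      _ < ε := by linarith
end

section
/- Let C_j^{(n)} be the number of cycles of length j of a uniform random permutation of {1,…,n}. For pairwise distinct k_1,…,k_s ≥ 1 and integers r_1,…,r_s ≥ 1, E((C_{k_1}^{(n)})^{r_1} ⋯ (C_{k_s}^{(n)})^{r_s}) = Σ_{m_1=1}^{r_1} ⋯ Σ_{m_s=1}^{r_s} (1/(k_1^{m_1} ⋯ k_s^{m_s})) · S(r_1,m_1) ⋯ S(r_s,m_s) · 1{ k_1 m_1 + ⋯ + k_s m_s ≤ n }, where S(r,m) is the Stirling number of the second kind (the number of partitions of a set of r elements into m nonempty unordered blocks). -/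
def stirling2 : ℕ → ℕ → ℕ
  | 0, 0 => 1
  | 0, _ + 1 => 0
  | _ + 1, 0 => 0
  | r + 1, m + 1 => (m + 1) * stirling2 r (m + 1) + stirling2 r m

lemma stirling2_eq_zero {r m : ℕ} (h : r < m) : stirling2 r m = 0 := by
  induction r generalizing m with
  | zero => cases m with
    | zero => omega
    | succ m => rfl
  | succ r ih =>
    cases m with
    | zero => omega
    | succ m =>
      rw [stirling2, ih (by omega), ih (by omega)]
      ring

lemma mul_descFactorial (x m : ℕ) :
    x * x.descFactorial m = x.descFactorial (m + 1) + m * x.descFactorial m := by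
  rcases le_or_gt m x with h | h
  · rw [Nat.descFactorial_succ]
    have : x = (x - m) + m := by omega
    nlinarith [Nat.sub_add_cancel h]
  · rw [Nat.descFactorial_eq_zero_iff_lt.2 h, Nat.descFactorial_eq_zero_iff_lt.2 (by omega)]
    ring

lemma pow_eq_sum_stirling2 (x r : ℕ) :
    x ^ r = ∑ m ∈ Finset.range (r + 1), stirling2 r m * x.descFactorial m := by
  induction r with
  | zero => simp [stirling2]
  | succ r ih =>
    have : x ^ (r + 1) = ∑ m ∈ Finset.range (r + 1),
        stirling2 r m * (x.descFactorial (m+1) + m * x.descFactorial m) := by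
      rw [pow_succ, ih, Finset.sum_mul]
      exact Finset.sum_congr rfl fun m _ => by rw [mul_assoc, mul_comm (x.descFactorial m) x, mul_descFactorial]
    rw [this]
    have hR : ∑ m ∈ Finset.range (r + 2), stirling2 (r+1) m * x.descFactorial m
        = ∑ m ∈ Finset.range (r + 1), stirling2 (r+1) (m+1) * x.descFactorial (m+1) := by
      rw [Finset.sum_range_succ' (fun m => stirling2 (r+1) m * x.descFactorial m) (r+1)]
      simp [stirling2]
    rw [hR]
    have h1 : ∀ m ∈ Finset.range (r+1), stirling2 (r+1) (m+1) * x.descFactorial (m+1)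
        = (m+1) * stirling2 r (m+1) * x.descFactorial (m+1) + stirling2 r m * x.descFactorial (m+1) := by
      intro m _; rw [stirling2]; ring
    rw [Finset.sum_congr rfl h1, Finset.sum_add_distrib]
    have h2 : ∑ m ∈ Finset.range (r+1), (m+1) * stirling2 r (m+1) * x.descFactorial (m+1)
        = ∑ m ∈ Finset.range (r+1), stirling2 r m * (m * x.descFactorial m) := by
      rw [Finset.sum_range_succ' (fun m => stirling2 r m * (m * x.descFactorial m)) r]
      rw [Finset.sum_range_succ]
      rw [stirling2_eq_zero (by omega)]
      simp [mul_comm, mul_assoc, mul_left_comm]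
    rw [h2, ← Finset.sum_add_distrib]
    exact Finset.sum_congr rfl fun m _ => by ring

open Equiv Function Finset
open Fin.NatCast Fin.CommRing

variable {n : ℕ}

lemma perm_periodicPt (σ : Equiv.Perm (Fin n)) (x : Fin n) : x ∈ Function.periodicPts σ := by
  refine ⟨orderOf σ, orderOf_pos σ, ?_⟩
  show σ^[orderOf σ] x = x
  rw [Equiv.Perm.iterate_eq_pow, pow_orderOf_eq_one, Equiv.Perm.one_apply]

lemma perm_minimalPeriod_pos (σ : Equiv.Perm (Fin n)) (x : Fin n) :
    0 < Function.minimalPeriod σ x :=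
  Function.minimalPeriod_pos_of_mem_periodicPts (perm_periodicPt σ x)

lemma perm_pow_minimalPeriod (σ : Equiv.Perm (Fin n)) (x : Fin n) :
    (σ ^ Function.minimalPeriod σ x) x = x := by
  exact Function.iterate_minimalPeriod (f := ⇑σ) (x := x)

lemma minimalPeriod_sameCycle {σ : Equiv.Perm (Fin n)} {x y : Fin n}
    (h : σ.SameCycle x y) : Function.minimalPeriod σ x = Function.minimalPeriod σ y := by
  obtain ⟨i, hi, rfl⟩ := h.exists_pow_eq'
  have := Function.minimalPeriod_apply_iterate (perm_periodicPt σ x) i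
  simpa [Equiv.Perm.iterate_eq_pow] using this.symm

noncomputable def cls (σ : Equiv.Perm (Fin n)) (x : Fin n) : Finset (Fin n) :=
  Finset.univ.filter (σ.SameCycle x)

lemma mem_cls {σ : Equiv.Perm (Fin n)} {x y : Fin n} :
    y ∈ cls σ x ↔ σ.SameCycle x y := by simp [cls]

lemma self_mem_cls {σ : Equiv.Perm (Fin n)} {x : Fin n} : x ∈ cls σ x :=
  mem_cls.2 (Equiv.Perm.SameCycle.refl σ x)

lemma cls_eq_of_sameCycle {σ : Equiv.Perm (Fin n)} {x y : Fin n}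
    (h : σ.SameCycle x y) : cls σ x = cls σ y := by
  ext z; simp only [mem_cls]
  exact ⟨fun hz => h.symm.trans hz, fun hz => h.trans hz⟩

lemma card_cls (σ : Equiv.Perm (Fin n)) (x : Fin n) :
    (cls σ x).card = Function.minimalPeriod σ x := by
  classical
  have himg : cls σ x =
      Finset.image (fun j : Fin (Function.minimalPeriod σ x) => (σ ^ (j : ℕ)) x) Finset.univ := by
    ext y
    simp only [mem_cls, Finset.mem_image, Finset.mem_univ, true_and]
    constructor
    · intro h
      obtain ⟨i, hi, rfl⟩ := h.exists_pow_eq'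
      refine ⟨⟨i % Function.minimalPeriod σ x, Nat.mod_lt _ (perm_minimalPeriod_pos σ x)⟩, ?_⟩
      show (σ ^ (i % Function.minimalPeriod σ x)) x = (σ ^ i) x
      exact Function.iterate_mod_minimalPeriod_eq (f := ⇑σ) (x := x) (n := i)
    · rintro ⟨j, rfl⟩
      exact ⟨(j : ℕ), rfl⟩
  rw [himg, Finset.card_image_of_injective _ ?_, Finset.card_univ, Fintype.card_fin]
  intro a b hab
  have := Function.iterate_injOn_Iio_minimalPeriod (f := ⇑σ) (x := x)
    (Set.mem_Iio.2 a.2) (Set.mem_Iio.2 b.2) (by simpa [Equiv.Perm.iterate_eq_pow] using hab)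
  exact Fin.ext this

lemma minimalPeriod_of_mem_cls {σ : Equiv.Perm (Fin n)} {x y : Fin n} (h : y ∈ cls σ x) :
    Function.minimalPeriod σ y = Function.minimalPeriod σ x :=
  (minimalPeriod_sameCycle (mem_cls.1 h)).symm

noncomputable def P (σ : Equiv.Perm (Fin n)) (j : ℕ) : Finset (Fin n) :=
  Finset.univ.filter (fun x => Function.minimalPeriod σ x = j)

noncomputable def Cyc (σ : Equiv.Perm (Fin n)) (j : ℕ) : Finset (Finset (Fin n)) :=
  (P σ j).image (cls σ)

lemma card_of_mem_Cyc {σ : Equiv.Perm (Fin n)} {j : ℕ} {c : Finset (Fin n)}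
    (hc : c ∈ Cyc σ j) : c.card = j := by
  obtain ⟨x, hx, rfl⟩ := Finset.mem_image.1 hc
  rw [card_cls]
  simpa [P] using hx

lemma P_eq_biUnion (σ : Equiv.Perm (Fin n)) (j : ℕ) :
    P σ j = (Cyc σ j).biUnion (fun c => c) := by
  ext y
  simp only [Finset.mem_biUnion, Cyc, Finset.mem_image]
  constructor
  · intro hy
    exact ⟨cls σ y, ⟨y, hy, rfl⟩, self_mem_cls⟩
  · rintro ⟨c, ⟨x, hx, rfl⟩, hyc⟩
    simp only [P, Finset.mem_filter, Finset.mem_univ, true_and] at hx ⊢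
    rw [minimalPeriod_of_mem_cls hyc, hx]

lemma Cyc_disjoint (σ : Equiv.Perm (Fin n)) (j : ℕ) :
    ∀ c₁ ∈ Cyc σ j, ∀ c₂ ∈ Cyc σ j, c₁ ≠ c₂ → Disjoint c₁ c₂ := by
  rintro c₁ h₁ c₂ h₂ hne
  obtain ⟨x₁, _, rfl⟩ := Finset.mem_image.1 h₁
  obtain ⟨x₂, _, rfl⟩ := Finset.mem_image.1 h₂
  refine Finset.disjoint_left.2 fun y hy₁ hy₂ => hne ?_
  exact (cls_eq_of_sameCycle (mem_cls.1 hy₁)).trans (cls_eq_of_sameCycle (mem_cls.1 hy₂)).symm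

lemma card_P (σ : Equiv.Perm (Fin n)) (j : ℕ) :
    (P σ j).card = j * (Cyc σ j).card := by
  rw [P_eq_biUnion, Finset.card_biUnion (Cyc_disjoint σ j)]
  rw [Finset.sum_congr rfl (fun c hc => (card_of_mem_Cyc hc : c.card = j))]
  simp [mul_comm]

noncomputable def numCycles {n : ℕ} (σ : Equiv.Perm (Fin n)) (j : ℕ) : ℕ :=
  Set.ncard {x : Fin n | Function.minimalPeriod σ x = j} / j

lemma numCycles_eq_card_Cyc (σ : Equiv.Perm (Fin n)) {j : ℕ} (hj : 1 ≤ j) :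
    numCycles σ j = (Cyc σ j).card := by
  classical
  have h1 : {x : Fin n | Function.minimalPeriod σ x = j}.ncard = (P σ j).card := by
    rw [Set.ncard_eq_toFinset_card']
    congr 1
    ext x
    simp [P]
  rw [numCycles, h1, card_P, Nat.mul_div_cancel_left _ hj]
section PerSigma

variable {n s : ℕ} {k m : Fin s → ℕ}

abbrev Idx (m : Fin s → ℕ) := Σ t : Fin s, Fin (m t)

def goodF (k m : Fin s → ℕ) (σ : Equiv.Perm (Fin n)) (f : Idx m → Fin n) : Prop :=
  (∀ p : Idx m, Function.minimalPeriod σ (f p) = k p.1) ∧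
  ∀ p q : Idx m, σ.SameCycle (f p) (f q) → p = q

lemma cls_mem_Cyc {σ : Equiv.Perm (Fin n)} {x : Fin n} {j : ℕ}
    (h : Function.minimalPeriod σ x = j) : cls σ x ∈ Cyc σ j :=
  Finset.mem_image.2 ⟨x, by simp [P, h], rfl⟩

lemma minimalPeriod_of_mem_Cyc {σ : Equiv.Perm (Fin n)} {c : Finset (Fin n)} {j : ℕ}
    (hc : c ∈ Cyc σ j) {y : Fin n} (hy : y ∈ c) : Function.minimalPeriod σ y = j := by
  obtain ⟨x, hx, rfl⟩ := Finset.mem_image.1 hc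
  rw [minimalPeriod_of_mem_cls hy]
  simpa [P] using hx

lemma cls_eq_of_mem_Cyc {σ : Equiv.Perm (Fin n)} {c : Finset (Fin n)} {j : ℕ}
    (hc : c ∈ Cyc σ j) {y : Fin n} (hy : y ∈ c) : cls σ y = c := by
  obtain ⟨x, hx, rfl⟩ := Finset.mem_image.1 hc
  exact (cls_eq_of_sameCycle (mem_cls.1 hy)).symm

/-- The cycle data of a good function. -/
noncomputable def Ψ (σ : Equiv.Perm (Fin n))
    (f : {f : Idx m → Fin n // goodF k m σ f}) :
    ∀ t, Fin (m t) ↪ {c : Finset (Fin n) // c ∈ Cyc σ (k t)} := fun t =>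
  ⟨fun i => ⟨cls σ (f.1 ⟨t, i⟩), cls_mem_Cyc (f.2.1 ⟨t, i⟩)⟩, by
    intro i i' h
    have h2 : cls σ (f.1 ⟨t, i⟩) = cls σ (f.1 ⟨t, i'⟩) := congrArg Subtype.val h
    have h3 : σ.SameCycle (f.1 ⟨t, i⟩) (f.1 ⟨t, i'⟩) :=
      mem_cls.1 (h2 ▸ self_mem_cls (x := f.1 ⟨t, i'⟩))
    have := f.2.2 _ _ h3
    simpa using this⟩

noncomputable def fiberEquiv (σ : Equiv.Perm (Fin n)) (hkdist : Function.Injective k)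
    (c : ∀ t, Fin (m t) ↪ {c : Finset (Fin n) // c ∈ Cyc σ (k t)}) :
    {f : {f : Idx m → Fin n // goodF k m σ f} // Ψ σ f = c} ≃
      ∀ p : Idx m, {x : Fin n // x ∈ (c p.1 p.2).1} where
  toFun f := fun p => ⟨f.1.1 p, by
    have h : (Ψ σ f.1 p.1 p.2).1 = (c p.1 p.2).1 := by rw [f.2]
    exact h ▸ self_mem_cls⟩
  invFun pts :=
    ⟨⟨fun p => (pts p).1, by
      constructor
      · intro p
        exact minimalPeriod_of_mem_Cyc (c p.1 p.2).2 (pts p).2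
      · rintro ⟨t, i⟩ ⟨t', i'⟩ h
        have e1 : cls σ (pts ⟨t, i⟩).1 = (c t i).1 :=
          cls_eq_of_mem_Cyc (c t i).2 (pts ⟨t, i⟩).2
        have e2 : cls σ (pts ⟨t', i'⟩).1 = (c t' i').1 :=
          cls_eq_of_mem_Cyc (c t' i').2 (pts ⟨t', i'⟩).2
        have e3 : (c t i).1 = (c t' i').1 := by
          rw [← e1, ← e2, cls_eq_of_sameCycle h]
        have e4 : k t = k t' := by
          rw [← card_of_mem_Cyc (c t i).2, ← card_of_mem_Cyc (c t' i').2, e3]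
        have e5 : t = t' := hkdist e4
        subst e5
        have : i = i' := (c t).injective (Subtype.ext e3)
        rw [this]⟩, by
      funext t
      apply Function.Embedding.ext
      intro i
      exact Subtype.ext (cls_eq_of_mem_Cyc (c t i).2 (pts ⟨t, i⟩).2)⟩
  left_inv f := Subtype.ext (Subtype.ext rfl)
  right_inv pts := by funext p; exact Subtype.ext rfl

lemma card_good (σ : Equiv.Perm (Fin n)) (hk : ∀ t, 1 ≤ k t)
    (hkdist : Function.Injective k) :
    Nat.card {f : Idx m → Fin n // goodF k m σ f} =
      (∏ t, (numCycles σ (k t)).descFactorial (m t)) * ∏ t, k t ^ m t := by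
  classical
  rw [Nat.card_congr (Equiv.sigmaFiberEquiv (Ψ (m := m) σ)).symm]
  rw [Nat.card_eq_fintype_card, Fintype.card_sigma]
  have hfib : ∀ c, Fintype.card {f : {f : Idx m → Fin n // goodF k m σ f} // Ψ σ f = c}
      = ∏ t, k t ^ m t := by
    intro c
    rw [Fintype.card_congr (fiberEquiv σ hkdist c), Fintype.card_pi]
    have : ∀ p : Idx m, Fintype.card {x : Fin n // x ∈ (c p.1 p.2).1} = k p.1 := by
      intro p
      rw [Fintype.card_coe]
      exact card_of_mem_Cyc (c p.1 p.2).2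
    rw [Finset.prod_congr rfl (fun p _ => this p)]
    rw [← Finset.univ_sigma_univ, Finset.prod_sigma]
    exact Finset.prod_congr rfl (fun t _ => by simp)
  rw [Finset.sum_congr rfl (fun c _ => hfib c), Finset.sum_const, Finset.card_univ, smul_eq_mul]
  congr 1
  rw [Fintype.card_pi]
  refine Finset.prod_congr rfl (fun t _ => ?_)
  rw [Fintype.card_embedding_eq, Fintype.card_fin, Fintype.card_coe,
    numCycles_eq_card_Cyc σ (hk t)]

end PerSigma
section Big

variable {n s : ℕ} {k m : Fin s → ℕ}

abbrev J (k m : Fin s → ℕ) := Σ p : Idx m, Fin (k p.1)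

def gfun (σ : Equiv.Perm (Fin n)) (f : Idx m → Fin n) : J k m → Fin n :=
  fun x => (σ ^ (x.2 : ℕ)) (f x.1)

variable {σ : Equiv.Perm (Fin n)} {f : Idx m → Fin n}

lemma pow_f_mod (hf : goodF k m σ f) (p : Idx m) (a : ℕ) :
    (σ ^ (a % k p.1)) (f p) = (σ ^ a) (f p) := by
  have h := Function.iterate_mod_minimalPeriod_eq (f := ⇑σ) (x := f p) (n := a)
  rw [hf.1 p] at h
  exact h

lemma pow_gfun (hf : goodF k m σ f) (i : ℕ) (p : Idx m) [NeZero (k p.1)]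
    (j : Fin (k p.1)) :
    (σ ^ i) (gfun σ f ⟨p, j⟩) = gfun σ f ⟨p, j + (i : Fin (k p.1))⟩ := by
  show (σ ^ i) ((σ ^ (j : ℕ)) (f p)) = (σ ^ ((j + (i : Fin (k p.1)) : Fin (k p.1)) : ℕ)) (f p)
  rw [← Equiv.Perm.mul_apply, ← pow_add]
  have hval : ((j + (i : Fin (k p.1)) : Fin (k p.1)) : ℕ) = ((j : ℕ) + i) % k p.1 := by
    rw [Fin.val_add, Fin.val_natCast]
    conv_rhs => rw [Nat.add_mod]
    rw [Nat.mod_eq_of_lt j.isLt]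
  rw [hval, pow_f_mod hf, add_comm]

lemma gfun_inj (hf : goodF k m σ f) : Function.Injective (gfun (k := k) σ f) := by
  rintro ⟨p, j⟩ ⟨p', j'⟩ h
  have h1 : σ.SameCycle (f p) ((σ ^ (j : ℕ)) (f p)) :=
    Equiv.Perm.sameCycle_pow_right.2 (Equiv.Perm.SameCycle.refl σ (f p))
  rw [show ((σ ^ (j : ℕ)) (f p)) = gfun σ f ⟨p, j⟩ from rfl, h] at h1
  have h2 : σ.SameCycle (f p) (f p') := Equiv.Perm.sameCycle_pow_right.1 h1
  have hpq : p = p' := hf.2 _ _ h2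
  subst hpq
  have h3 : (σ ^ (j : ℕ)) (f p) = (σ ^ (j' : ℕ)) (f p) := h
  have h4 : (j : ℕ) = (j' : ℕ) := by
    refine Function.iterate_injOn_Iio_minimalPeriod (f := ⇑σ) (x := f p) ?_ ?_ ?_
    · rw [hf.1 p]; exact Set.mem_Iio.2 j.isLt
    · rw [hf.1 p]; exact Set.mem_Iio.2 j'.isLt
    · exact h3
  exact Sigma.ext rfl (heq_of_eq (Fin.ext h4))

def rotJ (hk : ∀ t, 1 ≤ k t) : J k m ≃ J k m :=
  Equiv.sigmaCongrRight fun p =>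
    letI : NeZero (k p.1) := ⟨Nat.one_le_iff_ne_zero.mp (hk p.1)⟩
    Equiv.addRight 1

lemma rotJ_apply (hk : ∀ t, 1 ≤ k t) (p : Idx m) [NeZero (k p.1)] (j : Fin (k p.1)) :
    rotJ hk ⟨p, j⟩ = ⟨p, j + 1⟩ := rfl

lemma sigma_apply_gfun (hf : goodF k m σ f) (hk : ∀ t, 1 ≤ k t) (x : J k m) :
    σ (gfun σ f x) = gfun σ f (rotJ hk x) := by
  obtain ⟨p, j⟩ := x
  letI : NeZero (k p.1) := ⟨Nat.one_le_iff_ne_zero.mp (hk p.1)⟩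
  have := pow_gfun hf 1 p j
  rw [pow_one, Nat.cast_one] at this
  rw [this, rotJ_apply]

end Big
section Big2

variable {n s : ℕ} {k m : Fin s → ℕ}

noncomputable def eEq (g : J k m ↪ Fin n) :
    (J k m ⊕ {x : Fin n // x ∉ Set.range ⇑g}) ≃ Fin n :=
  letI : DecidablePred (· ∈ Set.range ⇑g) := fun _ => Classical.propDecidable _
  (Equiv.sumCongr (Equiv.ofInjective ⇑g g.injective) (Equiv.refl _)).trans
    (Equiv.sumCompl (· ∈ Set.range ⇑g))

lemma eEq_inl (g : J k m ↪ Fin n) (x : J k m) : eEq g (Sum.inl x) = g x := by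
  simp [eEq]

lemma eEq_inr (g : J k m ↪ Fin n) (y : {x : Fin n // x ∉ Set.range ⇑g}) :
    eEq g (Sum.inr y) = y.1 := by
  simp [eEq]

noncomputable def sigma' (hk : ∀ t, 1 ≤ k t) (g : J k m ↪ Fin n)
    (π : Equiv.Perm {x : Fin n // x ∉ Set.range ⇑g}) : Equiv.Perm (Fin n) :=
  (eEq g).symm.trans ((Equiv.sumCongr (rotJ hk) π).trans (eEq g))

lemma sigma'_apply_g (hk : ∀ t, 1 ≤ k t) (g : J k m ↪ Fin n)
    (π : Equiv.Perm {x : Fin n // x ∉ Set.range ⇑g}) (x : J k m) :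
    sigma' hk g π (g x) = g (rotJ hk x) := by
  have h1 : (eEq g).symm (g x) = Sum.inl x := by
    rw [Equiv.symm_apply_eq, eEq_inl]
  show eEq g ((Equiv.sumCongr (rotJ hk) π) ((eEq g).symm (g x))) = g (rotJ hk x)
  rw [h1]
  show eEq g (Sum.inl (rotJ hk x)) = g (rotJ hk x)
  rw [eEq_inl]

lemma sigma'_apply_notMem (hk : ∀ t, 1 ≤ k t) (g : J k m ↪ Fin n)
    (π : Equiv.Perm {x : Fin n // x ∉ Set.range ⇑g}) {x : Fin n} (hx : x ∉ Set.range ⇑g) :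
    sigma' hk g π x = (π ⟨x, hx⟩).1 := by
  have h1 : (eEq g).symm x = Sum.inr ⟨x, hx⟩ := by
    rw [Equiv.symm_apply_eq, eEq_inr]
  show eEq g ((Equiv.sumCongr (rotJ hk) π) ((eEq g).symm x)) = _
  rw [h1]
  show eEq g (Sum.inr (π ⟨x, hx⟩)) = _
  rw [eEq_inr]

def fzero (hk : ∀ t, 1 ≤ k t) (g : J k m ↪ Fin n) : Idx m → Fin n :=
  fun p => g ⟨p, ⟨0, hk p.1⟩⟩

lemma pow_sigma'_g (hk : ∀ t, 1 ≤ k t) (g : J k m ↪ Fin n)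
    (π : Equiv.Perm {x : Fin n // x ∉ Set.range ⇑g}) (i : ℕ) (p : Idx m)
    [NeZero (k p.1)] (j : Fin (k p.1)) :
    ((sigma' hk g π) ^ i) (g ⟨p, j⟩) = g ⟨p, j + (i : Fin (k p.1))⟩ := by
  induction i with
  | zero => simp
  | succ i ih =>
    rw [pow_succ', Equiv.Perm.mul_apply, ih, sigma'_apply_g, rotJ_apply]
    congr 2
    push_cast
    ring

lemma zero_eq (hk : ∀ t, 1 ≤ k t) (p : Idx m) [NeZero (k p.1)] :
    (⟨0, hk p.1⟩ : Fin (k p.1)) = 0 := by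
  apply Fin.ext
  simp

lemma good_sigma' (hk : ∀ t, 1 ≤ k t) (g : J k m ↪ Fin n)
    (π : Equiv.Perm {x : Fin n // x ∉ Set.range ⇑g}) :
    goodF k m (sigma' hk g π) (fzero hk g) := by
  have hpow : ∀ (p : Idx m) (i : ℕ), ∀ (_ : NeZero (k p.1)),
      ((sigma' hk g π) ^ i) (fzero hk g p) = g ⟨p, (i : Fin (k p.1))⟩ := by
    intro p i hNZ
    rw [fzero, zero_eq hk p, pow_sigma'_g, zero_add]
  constructor
  · intro p
    letI hNZ : NeZero (k p.1) := ⟨Nat.one_le_iff_ne_zero.mp (hk p.1)⟩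
    have hper : Function.IsPeriodicPt (sigma' hk g π) (k p.1) (fzero hk g p) := by
      show ((sigma' hk g π))^[k p.1] (fzero hk g p) = fzero hk g p
      rw [Equiv.Perm.iterate_eq_pow, hpow p (k p.1) hNZ]
      rw [fzero, zero_eq hk p]
      congr 2
      exact Fin.natCast_self _
    have h1 : Function.minimalPeriod (sigma' hk g π) (fzero hk g p) ∣ k p.1 :=
      Function.IsPeriodicPt.minimalPeriod_dvd hper
    have h2 : k p.1 ∣ Function.minimalPeriod (sigma' hk g π) (fzero hk g p) := by
      have h3 := perm_pow_minimalPeriod (sigma' hk g π) (fzero hk g p)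
      rw [hpow p _ hNZ] at h3
      rw [fzero, zero_eq hk p] at h3
      have h4 : (⟨p, ((Function.minimalPeriod (sigma' hk g π) (fzero hk g p) : Fin (k p.1)))⟩ : J k m)
          = ⟨p, 0⟩ := g.injective (by rw [← h3]; rfl)
      have h5 : ((Function.minimalPeriod (sigma' hk g π) (fzero hk g p) : Fin (k p.1))) = 0 :=
        eq_of_heq (Sigma.mk.inj_iff.1 h4).2
      exact Fin.natCast_eq_zero.1 h5
    exact Nat.dvd_antisymm h1 h2
  · intro p q h
    letI hNZp : NeZero (k p.1) := ⟨Nat.one_le_iff_ne_zero.mp (hk p.1)⟩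
    letI hNZq : NeZero (k q.1) := ⟨Nat.one_le_iff_ne_zero.mp (hk q.1)⟩
    obtain ⟨i, _, hi⟩ := h.exists_pow_eq'
    rw [hpow p i hNZp] at hi
    rw [fzero] at hi
    have := g.injective hi
    have h1 : p = q := congrArg Sigma.fst this
    exact h1

end Big2
section Big3

variable {n s : ℕ} {k m : Fin s → ℕ}

lemma mem_range_gfun_iff {σ : Equiv.Perm (Fin n)} {f : Idx m → Fin n}
    (hf : goodF k m σ f) (hk : ∀ t, 1 ≤ k t) (x : Fin n) :
    σ x ∈ Set.range (gfun (k := k) σ f) ↔ x ∈ Set.range (gfun (k := k) σ f) := by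
  constructor
  · rintro ⟨y, hy⟩
    refine ⟨(rotJ hk).symm y, σ.injective ?_⟩
    rw [sigma_apply_gfun hf hk, Equiv.apply_symm_apply, hy]
  · rintro ⟨y, rfl⟩
    exact ⟨rotJ hk y, (sigma_apply_gfun hf hk y).symm⟩

noncomputable def Γmap :
    {q : Equiv.Perm (Fin n) × (Idx m → Fin n) // goodF k m q.1 q.2} → (J k m ↪ Fin n) :=
  fun q => ⟨gfun q.1.1 q.1.2, gfun_inj q.2⟩

lemma gfun_sigma'_eq (hk : ∀ t, 1 ≤ k t) (g : J k m ↪ Fin n)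
    (π : Equiv.Perm {x : Fin n // x ∉ Set.range ⇑g}) :
    gfun (k := k) (sigma' hk g π) (fzero hk g) = ⇑g := by
  funext x
  obtain ⟨p, j⟩ := x
  letI : NeZero (k p.1) := ⟨Nat.one_le_iff_ne_zero.mp (hk p.1)⟩
  show ((sigma' hk g π) ^ (j : ℕ)) (fzero hk g p) = g ⟨p, j⟩
  rw [fzero, zero_eq hk p, pow_sigma'_g, zero_add, Fin.cast_val_eq_self]

noncomputable def bigFiberEquiv (hk : ∀ t, 1 ≤ k t) (g : J k m ↪ Fin n) :
    {q : {q : Equiv.Perm (Fin n) × (Idx m → Fin n) // goodF k m q.1 q.2} // Γmap q = g} ≃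
      Equiv.Perm {x : Fin n // x ∉ Set.range ⇑g} where
  toFun q :=
    q.1.1.1.subtypePerm (p := fun x => x ∉ Set.range ⇑g) (by
      intro x
      have hcoe : ⇑g = gfun (k := k) q.1.1.1 q.1.1.2 := congrArg (fun e : J k m ↪ Fin n => ⇑e) q.2.symm
      have h2 := mem_range_gfun_iff q.1.2 hk x
      rw [← hcoe] at h2
      exact not_iff_not.2 h2)
  invFun π :=
    ⟨⟨(sigma' hk g π, fzero hk g), good_sigma' hk g π⟩, by
      apply Function.Embedding.ext
      intro x
      show gfun (k := k) (sigma' hk g π) (fzero hk g) x = g x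
      rw [gfun_sigma'_eq]⟩
  left_inv := by
    rintro ⟨⟨⟨σ, f⟩, hgood⟩, hΓ⟩
    have hcoe : gfun (k := k) σ f = ⇑g := congrArg (fun e : J k m ↪ Fin n => ⇑e) hΓ
    apply Subtype.ext
    apply Subtype.ext
    show (sigma' hk g _, fzero hk g) = (σ, f)
    refine Prod.ext ?_ ?_
    · show sigma' hk g _ = σ
      apply Equiv.ext
      intro x
      by_cases hx : x ∈ Set.range ⇑g
      · obtain ⟨y, rfl⟩ := hx
        rw [sigma'_apply_g]
        show g (rotJ hk y) = σ (g y)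
        rw [← hcoe, ← sigma_apply_gfun hgood hk]
      · rw [sigma'_apply_notMem hk g _ hx]
        rfl
    · show fzero hk g = f
      funext p
      show g ⟨p, ⟨0, hk p.1⟩⟩ = f p
      rw [← hcoe]
      show (σ ^ ((⟨0, hk p.1⟩ : Fin (k p.1)) : ℕ)) (f p) = f p
      simp
  right_inv := by
    intro π
    apply Equiv.ext
    rintro ⟨x, hx⟩
    apply Subtype.ext
    show sigma' hk g π x = (π ⟨x, hx⟩).1
    rw [sigma'_apply_notMem hk g π hx]

lemma card_pairs (hk : ∀ t, 1 ≤ k t) :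
    Nat.card {q : Equiv.Perm (Fin n) × (Idx m → Fin n) // goodF k m q.1 q.2} =
      Fintype.card (J k m ↪ Fin n) * (n - Fintype.card (J k m)).factorial := by
  classical
  rw [Nat.card_congr (Equiv.sigmaFiberEquiv (Γmap (n := n) (k := k) (m := m))).symm,
    Nat.card_eq_fintype_card, Fintype.card_sigma]
  have hfib : ∀ g : J k m ↪ Fin n,
      Fintype.card {q : {q : Equiv.Perm (Fin n) × (Idx m → Fin n) // goodF k m q.1 q.2} //
        Γmap q = g} = (n - Fintype.card (J k m)).factorial := by
    intro g
    rw [Fintype.card_congr (bigFiberEquiv hk g), Fintype.card_perm]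
    congr 1
    have h1 : Fintype.card {x : Fin n // x ∉ Set.range ⇑g} =
        Fintype.card (Fin n) - Fintype.card {x : Fin n // x ∈ Set.range ⇑g} :=
      Fintype.card_subtype_compl _
    rw [h1, Fintype.card_fin]
    congr 1
    exact (Fintype.card_congr (Equiv.ofInjective ⇑g g.injective)).symm
  rw [Finset.sum_congr rfl (fun g _ => hfib g), Finset.sum_const, Finset.card_univ, smul_eq_mul]

def prodSubtypeSigmaEquiv {α β : Type*} (P : α → β → Prop) :
    {q : α × β // P q.1 q.2} ≃ Σ a : α, {b : β // P a b} :=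
  ⟨fun q => ⟨q.1.1, q.1.2, q.2⟩, fun x => ⟨(x.1, x.2.1), x.2.2⟩, fun _ => rfl, fun _ => rfl⟩

theorem key_count (hk : ∀ t, 1 ≤ k t) (hkdist : Function.Injective k) :
    (∏ t, k t ^ m t) * (∑ σ : Equiv.Perm (Fin n), ∏ t, (numCycles σ (k t)).descFactorial (m t)) =
      if (∑ t, m t * k t) ≤ n then n.factorial else 0 := by
  classical
  have hJ : Fintype.card (J k m) = ∑ t, m t * k t := by
    rw [Fintype.card_sigma]
    rw [← Finset.univ_sigma_univ, Finset.sum_sigma]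
    refine Finset.sum_congr rfl (fun t _ => ?_)
    simp [mul_comm]
  have h1 : Nat.card {q : Equiv.Perm (Fin n) × (Idx m → Fin n) // goodF k m q.1 q.2} =
      (∑ σ : Equiv.Perm (Fin n), ∏ t, (numCycles σ (k t)).descFactorial (m t)) *
        ∏ t, k t ^ m t := by
    rw [Nat.card_congr (prodSubtypeSigmaEquiv _), Nat.card_eq_fintype_card, Fintype.card_sigma]
    have hcg : ∀ σ : Equiv.Perm (Fin n), Fintype.card {b : Idx m → Fin n // goodF k m σ b} =
        (∏ t, (numCycles σ (k t)).descFactorial (m t)) * ∏ t, k t ^ m t := fun σ => by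
      rw [← Nat.card_eq_fintype_card]; exact card_good σ hk hkdist
    rw [Finset.sum_congr rfl (fun σ _ => hcg σ), ← Finset.sum_mul]
  have h2 := card_pairs (n := n) (k := k) (m := m) hk
  rw [h1] at h2
  rw [mul_comm, h2, Fintype.card_embedding_eq, Fintype.card_fin, hJ]
  split_ifs with h
  · rw [mul_comm]
    exact Nat.factorial_mul_descFactorial h
  · rw [Nat.descFactorial_eq_zero_iff_lt.2 (by omega), zero_mul]

end Big3
lemma stirling2_zero_of_pos {r : ℕ} (hr : 1 ≤ r) : stirling2 r 0 = 0 := by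
  cases r with
  | zero => omega
  | succ r => rfl

/-- for a uniform random permutation of `{1,…,n}`, for pairwise distinct
`k_1,…,k_s ≥ 1` and `r_1,…,r_s ≥ 1`,
`E(∏_t (C_{k_t})^{r_t}) = Σ_{m_1=1}^{r_1} ⋯ Σ_{m_s=1}^{r_s} ∏_t S(r_t, m_t)/k_t^{m_t}`,
the sum being restricted to `Σ_t k_t m_t ≤ n`. -/
theorem stmt19 (n s : ℕ) (k r : Fin s → ℕ)
    (hk : ∀ t, 1 ≤ k t) (hkdist : Function.Injective k) (hr : ∀ t, 1 ≤ r t) :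
    ((n.factorial : ℝ))⁻¹ *
        ∑ σ : Equiv.Perm (Fin n), ∏ t, (numCycles σ (k t) : ℝ) ^ (r t) =
      ∑ m : (∀ t : Fin s, Fin (r t)),
        if ∑ t, k t * ((m t : ℕ) + 1) ≤ n then
          ∏ t, (stirling2 (r t) ((m t : ℕ) + 1) : ℝ) / (k t : ℝ) ^ ((m t : ℕ) + 1)
        else 0 := by
  classical
  have hfac : (n.factorial : ℝ) ≠ 0 := by
    exact_mod_cast Nat.factorial_ne_zero n
  have hstep1 : ∀ σ : Equiv.Perm (Fin n), ∏ t, (numCycles σ (k t) : ℝ) ^ (r t)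
      = ∑ mm : (∀ t, Fin (r t + 1)), ∏ t,
          ((stirling2 (r t) (mm t) : ℝ) * ((numCycles σ (k t)).descFactorial (mm t) : ℝ)) := by
    intro σ
    have hx : ∀ t, (numCycles σ (k t) : ℝ) ^ (r t)
        = ∑ j : Fin (r t + 1), (stirling2 (r t) (j : ℕ) : ℝ) *
            ((numCycles σ (k t)).descFactorial (j : ℕ) : ℝ) := by
      intro t
      rw [← Finset.sum_range
        (fun j => (stirling2 (r t) j : ℝ) * ((numCycles σ (k t)).descFactorial j : ℝ))]
      have h0 := congrArg (Nat.cast (R := ℝ)) (pow_eq_sum_stirling2 (numCycles σ (k t)) (r t))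
      push_cast at h0
      exact h0
    rw [Finset.prod_congr rfl (fun t _ => hx t)]
    exact Fintype.prod_sum _
  rw [Finset.sum_congr rfl (fun σ _ => hstep1 σ), Finset.sum_comm]
  have hterm : ∀ mm : (∀ t, Fin (r t + 1)),
      ∑ σ : Equiv.Perm (Fin n), ∏ t,
          ((stirling2 (r t) (mm t) : ℝ) * ((numCycles σ (k t)).descFactorial (mm t) : ℝ))
      = (∏ t, (stirling2 (r t) (mm t) : ℝ)) *
          ((if (∑ t, (mm t : ℕ) * k t) ≤ n then (n.factorial : ℝ) else 0) /
            ∏ t, (k t : ℝ) ^ (mm t : ℕ)) := by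
    intro mm
    have hprodk : (0 : ℝ) < ∏ t, (k t : ℝ) ^ (mm t : ℕ) := by
      apply Finset.prod_pos
      intro t _
      have h1 := hk t
      positivity
    have h := key_count (n := n) (k := k) (m := fun t => (mm t : ℕ)) hk hkdist
    have h2 := congrArg (Nat.cast (R := ℝ)) h
    push_cast at h2
    have h3 : ∑ σ : Equiv.Perm (Fin n), ∏ t, ((numCycles σ (k t)).descFactorial (mm t) : ℝ)
        = (if (∑ t, (mm t : ℕ) * k t) ≤ n then (n.factorial : ℝ) else 0) /
            ∏ t, (k t : ℝ) ^ (mm t : ℕ) := by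
      rw [eq_div_iff hprodk.ne', mul_comm]
      exact h2
    rw [← h3, Finset.mul_sum]
    refine Finset.sum_congr rfl (fun σ _ => ?_)
    rw [Finset.prod_mul_distrib]
  rw [Finset.sum_congr rfl (fun mm _ => hterm mm), Finset.mul_sum]
  refine (Finset.sum_of_injOn (fun (m' : ∀ t, Fin (r t)) (t : Fin s) => (m' t).succ)
    ?_ ?_ ?_ ?_).symm
  · intro m1 _ m2 _ h
    funext t
    exact Fin.succ_injective _ (congrFun h t)
  · intro m' _
    exact Finset.mem_coe.2 (Finset.mem_univ _)
  · intro mm _ hmm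
    have hex : ∃ t, mm t = 0 := by
      by_contra hno
      push_neg at hno
      refine hmm ⟨fun t => (mm t).pred (hno t), Finset.mem_coe.2 (Finset.mem_univ _), ?_⟩
      funext t
      simp
    obtain ⟨t0, ht0⟩ := hex
    have hS : (∏ t, (stirling2 (r t) (mm t) : ℝ)) = 0 := by
      apply Finset.prod_eq_zero (Finset.mem_univ t0)
      rw [ht0]
      norm_cast
      exact stirling2_zero_of_pos (hr t0)
    rw [hS, zero_mul, mul_zero]
  · intro m' _
    simp only [Fin.val_succ]
    have hsum : (∑ t, ((m' t : ℕ) + 1) * k t) = ∑ t, k t * ((m' t : ℕ) + 1) :=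
      Finset.sum_congr rfl fun t _ => mul_comm _ _
    rw [hsum]
    split_ifs with h1
    · rw [Finset.prod_div_distrib]
      field_simp
    · simp
end
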